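/- If a digraph D=(V,A) has minimum dicut size τ and its underlying undirected graph admits a nowhere-zero circular k-flow for some rational k ≥ 2, then A can be partitioned into two arc sets J and A∖J such that both J and A∖J intersect every dicut of D in at least ⌊τ/k⌋ arcs (i.e., both are ⌊τ/k⌋-dijoins). -/

import Mathlib

open Finset

variable {V A : Type*} [Fintype V] [DecidableEq V] [Fintype A] [DecidableEq A]

/-- The arcs leaving the vertex set `U`. -/
def outArcs (src tgt : A → V) (U : Finset V) : Finset A :=
  univ.filter fun a => src a ∈ U ∧ tgt a ∉ U

/-- The arcs entering the vertex set `U`. -/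
def inArcs (src tgt : A → V) (U : Finset V) : Finset A :=
  univ.filter fun a => tgt a ∈ U ∧ src a ∉ U

/-- `U` induces a dicut: nonempty, proper, no entering arcs (the dicut is `outArcs U`). -/
def IsDicut (src tgt : A → V) (U : Finset V) : Prop :=
  U.Nonempty ∧ U ≠ univ ∧ inArcs src tgt U = ∅

/-- A dijoin: an arc set meeting every dicut. -/
def IsDijoin (src tgt : A → V) (J : Finset A) : Prop :=
  ∀ U : Finset V, IsDicut src tgt U → (outArcs src tgt U ∩ J).Nonempty

/-- Tail of an arc under the orientation `o` of the underlying undirected graph. -/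
def otail (src tgt : A → V) (o : A → Bool) (a : A) : V := if o a then src a else tgt a

/-- Head of an arc under the orientation `o` of the underlying undirected graph. -/
def ohead (src tgt : A → V) (o : A → Bool) (a : A) : V := if o a then tgt a else src a

/-- The underlying undirected graph admits a nowhere-zero circular `k`-flow: an orientation
`o` of the edges together with a circulation `f` with `1 ≤ f_e ≤ k - 1` everywhere. -/
def HasNZCircularFlow (src tgt : A → V) (k : ℚ) : Prop :=
  ∃ (o : A → Bool) (f : A → ℚ),
    (∀ v : V, ∑ a ∈ univ.filter (fun a => otail src tgt o a = v), f a
            = ∑ a ∈ univ.filter (fun a => ohead src tgt o a = v), f a) ∧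
    ∀ a : A, 1 ≤ f a ∧ f a ≤ k - 1

/-- If `D` has minimum dicut size `τ` and its underlying undirected graph admits a nowhere-zero
circular `k`-flow (`k ≥ 2` rational), then the arcs can be partitioned into `J` and its
complement, both of which are `⌊τ/k⌋`-dijoins. -/
lemma bound_aux {A : Type*} [DecidableEq A] (k : ℚ) (hk : 2 ≤ k) (τ : ℕ)
    (s t : Finset A) (f : A → ℚ)
    (h1 : ∀ a ∈ s, f a ≤ k - 1) (h2 : ∀ a ∈ t, 1 ≤ f a)
    (heq : ∑ a ∈ s, f a = ∑ a ∈ t, f a)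
    (hτ : (τ : ℚ) ≤ s.card + t.card) : ⌊(τ : ℚ) / k⌋ ≤ (s.card : ℤ) := by
  have hkpos : (0:ℚ) < k := by linarith
  have hs : ∑ a ∈ s, f a ≤ s.card * (k - 1) := by
    calc ∑ a ∈ s, f a ≤ ∑ _a ∈ s, (k-1) := Finset.sum_le_sum h1
    _ = s.card * (k-1) := by rw [Finset.sum_const, nsmul_eq_mul]
  have ht : (t.card : ℚ) ≤ ∑ a ∈ t, f a := by
    calc (t.card : ℚ) = ∑ _a ∈ t, (1:ℚ) := by rw [Finset.sum_const, nsmul_eq_mul, mul_one]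
    _ ≤ ∑ a ∈ t, f a := Finset.sum_le_sum h2
  have : (τ : ℚ) ≤ s.card * k := by nlinarith
  have hdiv : (τ : ℚ) / k ≤ (s.card : ℚ) := by
    rw [div_le_iff₀ hkpos]; linarith
  calc ⌊(τ : ℚ) / k⌋ ≤ ⌊(s.card : ℚ)⌋ := Int.floor_le_floor hdiv
  _ = (s.card : ℤ) := by exact_mod_cast Int.floor_natCast s.card

theorem decompose_into_two_dijoins (src tgt : A → V) (τ : ℕ) (k : ℚ) (hk : 2 ≤ k)
    (hmin : ∀ U : Finset V, IsDicut src tgt U → τ ≤ (outArcs src tgt U).card)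
    (hflow : HasNZCircularFlow src tgt k) :
    ∃ J : Finset A,
      (∀ U : Finset V, IsDicut src tgt U →
        ⌊(τ : ℚ) / k⌋ ≤ ((outArcs src tgt U ∩ J).card : ℤ)) ∧
      (∀ U : Finset V, IsDicut src tgt U →
        ⌊(τ : ℚ) / k⌋ ≤ ((outArcs src tgt U ∩ (univ \ J)).card : ℤ)) := by
  obtain ⟨o, f, hcons, hbd⟩ := hflow
  set J : Finset A := univ.filter (fun a => o a = true) with hJ
  -- key equation for each dicut
  have key : ∀ U : Finset V, IsDicut src tgt U →
      ∑ a ∈ outArcs src tgt U ∩ J, f a = ∑ a ∈ outArcs src tgt U ∩ (univ \ J), f a := by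
    intro U hU
    obtain ⟨-, -, hin⟩ := hU
    have hin' : ∀ a : A, ¬ (tgt a ∈ U ∧ src a ∉ U) := by
      intro a ha
      have : a ∈ inArcs src tgt U := by simp [inArcs, ha.1, ha.2]
      simp [hin] at this
    have hT : ∑ a ∈ univ.filter (fun a => otail src tgt o a ∈ U), f a
            = ∑ a ∈ univ.filter (fun a => ohead src tgt o a ∈ U), f a := by
      rw [← Finset.sum_fiberwise_eq_sum_filter univ U (otail src tgt o) f,
          ← Finset.sum_fiberwise_eq_sum_filter univ U (ohead src tgt o) f]
      exact Finset.sum_congr rfl fun v _ => hcons v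
    have split1 : ∑ a ∈ univ.filter (fun a => otail src tgt o a ∈ U), f a
        = ∑ a ∈ univ.filter (fun a => otail src tgt o a ∈ U ∧ ohead src tgt o a ∈ U), f a
        + ∑ a ∈ univ.filter (fun a => otail src tgt o a ∈ U ∧ ohead src tgt o a ∉ U), f a := by
      rw [← Finset.sum_filter_add_sum_filter_not
        (univ.filter (fun a => otail src tgt o a ∈ U)) (fun a => ohead src tgt o a ∈ U) f,
        Finset.filter_filter, Finset.filter_filter]
    have split2 : ∑ a ∈ univ.filter (fun a => ohead src tgt o a ∈ U), f a
        = ∑ a ∈ univ.filter (fun a => otail src tgt o a ∈ U ∧ ohead src tgt o a ∈ U), f a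
        + ∑ a ∈ univ.filter (fun a => ohead src tgt o a ∈ U ∧ otail src tgt o a ∉ U), f a := by
      rw [← Finset.sum_filter_add_sum_filter_not
        (univ.filter (fun a => ohead src tgt o a ∈ U)) (fun a => otail src tgt o a ∈ U) f,
        Finset.filter_filter, Finset.filter_filter]
      congr 2
      ext a
      simp [and_comm]
    have hcross : ∑ a ∈ univ.filter (fun a => otail src tgt o a ∈ U ∧ ohead src tgt o a ∉ U), f a
        = ∑ a ∈ univ.filter (fun a => ohead src tgt o a ∈ U ∧ otail src tgt o a ∉ U), f a := by
      have := hT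
      rw [split1, split2] at this
      linarith
    have e1 : univ.filter (fun a => otail src tgt o a ∈ U ∧ ohead src tgt o a ∉ U)
        = outArcs src tgt U ∩ J := by
      ext a
      rw [Finset.mem_filter]
      have hna := hin' a
      simp only [Finset.mem_filter, Finset.mem_univ, true_and, outArcs, hJ,
        Finset.mem_inter, otail, ohead]
      cases h : o a <;> simp [h] <;> tauto
    have e2 : univ.filter (fun a => ohead src tgt o a ∈ U ∧ otail src tgt o a ∉ U)
        = outArcs src tgt U ∩ (univ \ J) := by
      ext a
      rw [Finset.mem_filter]
      have hna := hin' a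
      simp only [Finset.mem_filter, Finset.mem_univ, true_and, outArcs, hJ,
        Finset.mem_inter, Finset.mem_sdiff, otail, ohead]
      cases h : o a <;> simp [h] <;> tauto
    rw [← e1, ← e2, hcross]
  refine ⟨J, ?_, ?_⟩
  · intro U hU
    have hτ : (τ : ℚ) ≤ (outArcs src tgt U ∩ J).card + (outArcs src tgt U ∩ (univ \ J)).card := by
      have hcard : (outArcs src tgt U ∩ J).card + (outArcs src tgt U ∩ (univ \ J)).card
          = (outArcs src tgt U).card := by
        rw [← Finset.card_union_of_disjoint]
        · rw [← Finset.inter_union_distrib_left,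
            Finset.union_sdiff_of_subset (Finset.subset_univ J), Finset.inter_univ]
        · exact Finset.disjoint_left.2 fun a ha hb => by
            simp only [Finset.mem_inter, Finset.mem_sdiff] at ha hb
            exact hb.2.2 ha.2
      have h := hmin U hU
      rw [← hcard] at h
      exact_mod_cast h
    exact bound_aux k hk τ _ _ f (fun a _ => (hbd a).2) (fun a _ => (hbd a).1) (key U hU) hτ
  · intro U hU
    have hτ : (τ : ℚ) ≤ (outArcs src tgt U ∩ (univ \ J)).card + (outArcs src tgt U ∩ J).card := by
      have hcard : (outArcs src tgt U ∩ J).card + (outArcs src tgt U ∩ (univ \ J)).card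
          = (outArcs src tgt U).card := by
        rw [← Finset.card_union_of_disjoint]
        · rw [← Finset.inter_union_distrib_left,
            Finset.union_sdiff_of_subset (Finset.subset_univ J), Finset.inter_univ]
        · exact Finset.disjoint_left.2 fun a ha hb => by
            simp only [Finset.mem_inter, Finset.mem_sdiff] at ha hb
            exact hb.2.2 ha.2
      have h := hmin U hU
      rw [add_comm] at hcard
      rw [← hcard] at h
      exact_mod_cast h
    exact bound_aux k hk τ _ _ f (fun a _ => (hbd a).2) (fun a _ => (hbd a).1) (key U hU).symm hτ
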